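/- Perturbation of supersolutions by a strictly positive smooth function: let T > 0, λ := γ̄·M + 1, and H̃(t,x,r,p,N) := −λ·r + e^{λt}·H(x, e^{−λt}·r, e^{−λt}·p, e^{−λt}·N). For ρ ≥ 0 set φ_ρ(t,x) := e^{−ρt}·(1 + |x|²). Then there exists ρ₀ ≥ 0, depending only on d and on the uniform bounds for b and σ, such that for every ρ ≥ ρ₀, every ε > 0, and every continuous viscosity supersolution u : [0,T]×ℝ^d → ℝ of ∂_t u + H̃(t, x, u, D_x u, D²_x u) = 0 on [0,T)×ℝ^d with u bounded, the function u + ε·φ_ρ is again a viscosity supersolution of the same equation on [0,T)×ℝ^d. -/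

import Mathlib

open scoped BigOperators
open Set Filter

noncomputable section

/-- Clamp a real number to the interval `[-1, 1]`. -/
def clamp (r : ℝ) : ℝ := max (-1) (min 1 r)

/-- Dot product on `Fin n → ℝ`. -/
def dotp {n : ℕ} (x y : Fin n → ℝ) : ℝ := ∑ i, x i * y i

/-- The clamped branching nonlinearity `G^a(x,r)`. -/
def Gb {d : ℕ} {A : Type*} (γ : (Fin d → ℝ) → A → ℝ)
    (p : ℕ → (Fin d → ℝ) → A → ℝ) (x : Fin d → ℝ) (a : A) (r : ℝ) : ℝ :=
  γ x a * ((∑' k : ℕ, p k x a * (clamp r) ^ k) - clamp r)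

/-- The Hamiltonian
`H(x,r,p,N) = inf_a { b·p + (1/2) tr(σσᵀ N) + G^a(x,r) - c(x,a) r }`. -/
def Ham {d m : ℕ} {A : Type*} (b : (Fin d → ℝ) → A → (Fin d → ℝ))
    (σ : (Fin d → ℝ) → A → (Fin d → Fin m → ℝ))
    (γ : (Fin d → ℝ) → A → ℝ) (p : ℕ → (Fin d → ℝ) → A → ℝ)
    (c : (Fin d → ℝ) → A → ℝ)
    (x : Fin d → ℝ) (r : ℝ) (q : Fin d → ℝ) (N : Fin d → Fin d → ℝ) : ℝ :=
  ⨅ a : A, (dotp (b x a) q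
      + (1 / 2) * (∑ i, ∑ j, (∑ l, σ x a i l * σ x a j l) * N j i)
      + Gb γ p x a r - c x a * r)

/-- A modulus of continuity: nondecreasing, nonnegative, tending to `0` at `0⁺`. -/
def IsModulus (ρ : ℝ → ℝ) : Prop :=
  (∀ s, 0 ≤ ρ s) ∧ Monotone ρ ∧
    Filter.Tendsto ρ (nhdsWithin 0 (Set.Ioi 0)) (nhds 0)

/-- The continuous linear map `v ↦ dotp w v` on `Fin n → ℝ`. -/
def gradCLM {n : ℕ} (w : Fin n → ℝ) : (Fin n → ℝ) →L[ℝ] ℝ :=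
  ∑ i, w i • (ContinuousLinearMap.proj i : (Fin n → ℝ) →L[ℝ] ℝ)

/-- Test function data: a candidate test function together with its time
derivative, spatial gradient and spatial Hessian. -/
structure TestData (d : ℕ) where
  φ : ℝ → (Fin d → ℝ) → ℝ
  φt : ℝ → (Fin d → ℝ) → ℝ
  Dφ : ℝ → (Fin d → ℝ) → (Fin d → ℝ)
  D2φ : ℝ → (Fin d → ℝ) → (Fin d → Fin d → ℝ)

/-- `ψ` records a function which is `C¹` in time and `C²` in space, together with
its derivatives. -/
def IsC12 {d : ℕ} (ψ : TestData d) : Prop :=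
  (∀ s y, HasDerivAt (fun τ => ψ.φ τ y) (ψ.φt s y) s) ∧
  (∀ s y, HasFDerivAt (fun z => ψ.φ s z) (gradCLM (ψ.Dφ s y)) y) ∧
  (∀ s y i, HasFDerivAt (fun z => ψ.Dφ s z i) (gradCLM (fun j => ψ.D2φ s y i j)) y) ∧
  Continuous (fun q : ℝ × (Fin d → ℝ) => ψ.φ q.1 q.2) ∧
  Continuous (fun q : ℝ × (Fin d → ℝ) => ψ.φt q.1 q.2) ∧
  Continuous (fun q : ℝ × (Fin d → ℝ) => ψ.Dφ q.1 q.2) ∧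
  Continuous (fun q : ℝ × (Fin d → ℝ) => ψ.D2φ q.1 q.2)

/-- Viscosity subsolution of `∂ₜ u + F(t, x, u, D_x u, D²_x u) = 0` on `[0,T) × ℝ^d`. -/
def IsViscSubsoln {d : ℕ} (T : ℝ)
    (F : ℝ → (Fin d → ℝ) → ℝ → (Fin d → ℝ) → (Fin d → Fin d → ℝ) → ℝ)
    (u : ℝ → (Fin d → ℝ) → ℝ) : Prop :=
  ∀ t x, 0 ≤ t → t < T → ∀ ψ : TestData d, IsC12 ψ →
    IsLocalMaxOn (fun q : ℝ × (Fin d → ℝ) => u q.1 q.2 - ψ.φ q.1 q.2)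
      (Set.Icc (0 : ℝ) T ×ˢ (Set.univ : Set (Fin d → ℝ))) (t, x) →
    u t x = ψ.φ t x →
    0 ≤ ψ.φt t x + F t x (u t x) (ψ.Dφ t x) (ψ.D2φ t x)

/-- Viscosity supersolution of `∂ₜ u + F(t, x, u, D_x u, D²_x u) = 0` on `[0,T) × ℝ^d`. -/
def IsViscSupersoln {d : ℕ} (T : ℝ)
    (F : ℝ → (Fin d → ℝ) → ℝ → (Fin d → ℝ) → (Fin d → Fin d → ℝ) → ℝ)
    (u : ℝ → (Fin d → ℝ) → ℝ) : Prop :=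
  ∀ t x, 0 ≤ t → t < T → ∀ ψ : TestData d, IsC12 ψ →
    IsLocalMinOn (fun q : ℝ × (Fin d → ℝ) => u q.1 q.2 - ψ.φ q.1 q.2)
      (Set.Icc (0 : ℝ) T ×ˢ (Set.univ : Set (Fin d → ℝ))) (t, x) →
    u t x = ψ.φ t x →
    ψ.φt t x + F t x (u t x) (ψ.Dφ t x) (ψ.D2φ t x) ≤ 0



/-- The exponentially rescaled Hamiltonian
`H̃(t,x,r,p,N) = −λ r + e^{λt} H(x, e^{−λt} r, e^{−λt} p, e^{−λt} N)`. -/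
def HamT {d m : ℕ} {A : Type*} (b : (Fin d → ℝ) → A → (Fin d → ℝ))
    (σ : (Fin d → ℝ) → A → (Fin d → Fin m → ℝ))
    (γ : (Fin d → ℝ) → A → ℝ) (p : ℕ → (Fin d → ℝ) → A → ℝ)
    (c : (Fin d → ℝ) → A → ℝ) (lam : ℝ)
    (t : ℝ) (x : Fin d → ℝ) (r : ℝ) (q : Fin d → ℝ) (N : Fin d → Fin d → ℝ) : ℝ :=
  -lam * r + Real.exp (lam * t) *
    Ham b σ γ p c x (Real.exp (-lam * t) * r)
      (fun i => Real.exp (-lam * t) * q i)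
      (fun i j => Real.exp (-lam * t) * N i j)

section Helpers

lemma clamp_mem (r : ℝ) : -1 ≤ clamp r ∧ clamp r ≤ 1 :=
  ⟨le_max_left _ _, max_le (by norm_num) (min_le_left _ _)⟩

lemma clamp_mono {r s : ℝ} (h : r ≤ s) : clamp r ≤ clamp s :=
  max_le_max le_rfl (min_le_min le_rfl h)

lemma clamp_lip {r s : ℝ} (h : r ≤ s) : clamp s - clamp r ≤ s - r := by
  unfold clamp
  simp only [max_def, min_def]
  split_ifs <;> linarith

lemma abs_pow_le_one {r : ℝ} (h1 : -1 ≤ r) (h2 : r ≤ 1) (n : ℕ) : |r ^ n| ≤ 1 := by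
  rw [abs_pow]
  exact pow_le_one₀ (abs_nonneg r) (abs_le.mpr ⟨h1, h2⟩)

lemma pow_sub_pow_le' {t s : ℝ} (ht : -1 ≤ t) (hs : s ≤ 1) (hts : t ≤ s) (k : ℕ) :
    s ^ k - t ^ k ≤ k * (s - t) := by
  have ht1 : t ≤ 1 := le_trans hts hs
  have hs1 : -1 ≤ s := le_trans ht hts
  rw [← geom_sum₂_mul s t k]
  have hsum : (∑ i ∈ Finset.range k, s ^ i * t ^ (k - 1 - i)) ≤ (k : ℝ) := by
    calc (∑ i ∈ Finset.range k, s ^ i * t ^ (k - 1 - i))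
        ≤ ∑ _i ∈ Finset.range k, (1 : ℝ) := by
          apply Finset.sum_le_sum
          intro i _
          calc s ^ i * t ^ (k - 1 - i) ≤ |s ^ i * t ^ (k - 1 - i)| := le_abs_self _
            _ = |s ^ i| * |t ^ (k - 1 - i)| := abs_mul _ _
            _ ≤ 1 * 1 := mul_le_mul (abs_pow_le_one hs1 hs i)
                (abs_pow_le_one ht ht1 _) (abs_nonneg _) zero_le_one
            _ = 1 := one_mul 1
      _ = (k : ℝ) := by simp
  exact mul_le_mul_of_nonneg_right hsum (sub_nonneg.mpr hts)
    |>.trans_eq rfl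

lemma summable_pchi {P : ℕ → ℝ} (hP0 : ∀ k, 0 ≤ P k) (hPs : Summable P)
    {χ : ℝ} (h1 : -1 ≤ χ) (h2 : χ ≤ 1) : Summable (fun k => P k * χ ^ k) := by
  have hb : ∀ k, |P k * χ ^ k| ≤ P k := by
    intro k
    rw [abs_mul, abs_of_nonneg (hP0 k)]
    have := abs_pow_le_one h1 h2 k
    nlinarith [hP0 k, abs_nonneg (χ ^ k)]
  exact Summable.of_abs (Summable.of_nonneg_of_le (fun k => abs_nonneg _) hb hPs)

lemma Gb_sub_le {d : ℕ} {A : Type*} (γ : (Fin d → ℝ) → A → ℝ)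
    (p : ℕ → (Fin d → ℝ) → A → ℝ) (γbar M : ℝ) (hM : 0 ≤ M)
    (x : Fin d → ℝ) (a : A)
    (hγ0 : 0 ≤ γ x a) (hγb : γ x a ≤ γbar)
    (hp0 : ∀ k, 0 ≤ p k x a)
    (hpsum : HasSum (fun k => p k x a) 1)
    (hpmean : ∃ S, S ≤ M ∧ HasSum (fun k : ℕ => (k : ℝ) * p k x a) S)
    {r₁ r₂ : ℝ} (h : r₁ ≤ r₂) :
    Gb γ p x a r₂ - Gb γ p x a r₁ ≤ γbar * M * (r₂ - r₁) := by
  obtain ⟨S, hSM, hS⟩ := hpmean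
  have h1 := clamp_mem r₁
  have h2 := clamp_mem r₂
  have hχle : clamp r₁ ≤ clamp r₂ := clamp_mono h
  have hΔ : (0:ℝ) ≤ clamp r₂ - clamp r₁ := sub_nonneg.mpr hχle
  have hΔle : clamp r₂ - clamp r₁ ≤ r₂ - r₁ := clamp_lip h
  have hsum1 : Summable (fun k => p k x a * clamp r₁ ^ k) :=
    summable_pchi hp0 hpsum.summable h1.1 h1.2
  have hsum2 : Summable (fun k => p k x a * clamp r₂ ^ k) :=
    summable_pchi hp0 hpsum.summable h2.1 h2.2
  have hmulΔ := hS.mul_right (clamp r₂ - clamp r₁)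
  have hTdiff : (∑' k, p k x a * clamp r₂ ^ k) - (∑' k, p k x a * clamp r₁ ^ k)
      ≤ S * (clamp r₂ - clamp r₁) := by
    rw [← Summable.tsum_sub hsum2 hsum1, ← hmulΔ.tsum_eq]
    apply Summable.tsum_le_tsum _ (hsum2.sub hsum1) hmulΔ.summable
    intro k
    have hpow := pow_sub_pow_le' h1.1 h2.2 hχle k
    nlinarith [hp0 k]
  have e1 : γ x a * ((∑' k, p k x a * clamp r₂ ^ k) - (∑' k, p k x a * clamp r₁ ^ k))
      ≤ γ x a * (S * (clamp r₂ - clamp r₁)) := mul_le_mul_of_nonneg_left hTdiff hγ0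
  have e2 : γ x a * (S * (clamp r₂ - clamp r₁)) ≤ γ x a * (M * (clamp r₂ - clamp r₁)) :=
    mul_le_mul_of_nonneg_left (mul_le_mul_of_nonneg_right hSM hΔ) hγ0
  have e3 : γ x a * (M * (clamp r₂ - clamp r₁)) ≤ γbar * (M * (clamp r₂ - clamp r₁)) :=
    mul_le_mul_of_nonneg_right hγb (mul_nonneg hM hΔ)
  have e4 : γbar * (M * (clamp r₂ - clamp r₁)) ≤ γbar * (M * (r₂ - r₁)) :=
    mul_le_mul_of_nonneg_left (mul_le_mul_of_nonneg_left hΔle hM) (le_trans hγ0 hγb)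
  have e5 : 0 ≤ γ x a * (clamp r₂ - clamp r₁) := mul_nonneg hγ0 hΔ
  unfold Gb
  nlinarith [e1, e2, e3, e4, e5]

lemma Gb_lower {d : ℕ} {A : Type*} (γ : (Fin d → ℝ) → A → ℝ)
    (p : ℕ → (Fin d → ℝ) → A → ℝ) (γbar : ℝ)
    (x : Fin d → ℝ) (a : A)
    (hγ0 : 0 ≤ γ x a) (hγb : γ x a ≤ γbar)
    (hp0 : ∀ k, 0 ≤ p k x a)
    (hpsum : HasSum (fun k => p k x a) 1)
    (r : ℝ) : -(2 * γbar) ≤ Gb γ p x a r := by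
  have hχ := clamp_mem r
  have hsumm : Summable (fun k => p k x a * clamp r ^ k) :=
    summable_pchi hp0 hpsum.summable hχ.1 hχ.2
  have hterm : ∀ k, -(p k x a) ≤ p k x a * clamp r ^ k ∧ p k x a * clamp r ^ k ≤ p k x a := by
    intro k
    have hpow := abs_le.mp (abs_pow_le_one hχ.1 hχ.2 k)
    constructor <;> nlinarith [hp0 k]
  have hTlow : (-1:ℝ) ≤ ∑' k, p k x a * clamp r ^ k := by
    have hneg : HasSum (fun k => -(p k x a)) (-1) := hpsum.neg
    calc (-1:ℝ) = ∑' k, -(p k x a) := (hneg.tsum_eq).symm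
      _ ≤ ∑' k, p k x a * clamp r ^ k :=
        Summable.tsum_le_tsum (fun k => (hterm k).1) hneg.summable hsumm
  have hTup : (∑' k, p k x a * clamp r ^ k) ≤ 1 := by
    calc (∑' k, p k x a * clamp r ^ k) ≤ ∑' k, p k x a :=
        Summable.tsum_le_tsum (fun k => (hterm k).2) hsumm hpsum.summable
      _ = 1 := hpsum.tsum_eq
  unfold Gb
  nlinarith [hχ.1, hχ.2]

end Helpers

section CalcHelpers

lemma gradCLM_apply {n : ℕ} (w z : Fin n → ℝ) : gradCLM w z = ∑ i, w i * z i := by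
  simp [gradCLM, ContinuousLinearMap.sum_apply]

lemma hasFDerivAt_sq_sum {n : ℕ} (y : Fin n → ℝ) :
    HasFDerivAt (fun z : Fin n → ℝ => ∑ i, z i ^ 2) (gradCLM (fun i => 2 * y i)) y := by
  have h : ∀ i : Fin n, HasFDerivAt (fun z : Fin n → ℝ => z i ^ 2)
      ((2 * y i) • (ContinuousLinearMap.proj i : (Fin n → ℝ) →L[ℝ] ℝ)) y := by
    intro i
    have h1 : HasFDerivAt (fun z : Fin n → ℝ => z i)
        (ContinuousLinearMap.proj i : (Fin n → ℝ) →L[ℝ] ℝ) y :=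
      (ContinuousLinearMap.proj i : (Fin n → ℝ) →L[ℝ] ℝ).hasFDerivAt
    have h2 := h1.mul h1
    have heq : (2 * y i) • (ContinuousLinearMap.proj i : (Fin n → ℝ) →L[ℝ] ℝ)
        = y i • (ContinuousLinearMap.proj i : (Fin n → ℝ) →L[ℝ] ℝ)
          + y i • (ContinuousLinearMap.proj i : (Fin n → ℝ) →L[ℝ] ℝ) := by
      rw [two_mul, add_smul]
    rw [heq]
    simp only [pow_two]
    exact h2
  have hsum := HasFDerivAt.fun_sum (fun i (_ : i ∈ Finset.univ) => h i)
  simpa [gradCLM] using hsum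

lemma gradCLM_sub {n : ℕ} (w v : Fin n → ℝ) (cc : ℝ) :
    gradCLM w - cc • gradCLM v = gradCLM (fun i => w i - cc * v i) := by
  refine ContinuousLinearMap.ext fun z => ?_
  simp only [ContinuousLinearMap.sub_apply, ContinuousLinearMap.smul_apply,
    gradCLM_apply, smul_eq_mul, Finset.mul_sum, ← Finset.sum_sub_distrib]
  exact Finset.sum_congr rfl fun i _ => by ring

lemma gradCLM_proj {n : ℕ} (i : Fin n) (cc : ℝ) :
    cc • (ContinuousLinearMap.proj i : (Fin n → ℝ) →L[ℝ] ℝ)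
      = gradCLM (fun j => if i = j then cc else 0) := by
  refine ContinuousLinearMap.ext fun z => ?_
  simp only [ContinuousLinearMap.smul_apply, gradCLM_apply, smul_eq_mul,
    ContinuousLinearMap.proj_apply]
  simp only [ite_mul, zero_mul, Finset.sum_ite_eq, Finset.mem_univ, if_true]

end CalcHelpers

lemma ciInf_le_ciInf_add {A : Type*} [Nonempty A] {f g : A → ℝ} {K B : ℝ}
    (hf : ∀ a, -B ≤ f a) (h : ∀ a, f a ≤ g a + K) : (⨅ a, f a) ≤ (⨅ a, g a) + K := by
  have hbdd : BddBelow (Set.range f) := ⟨-B, by rintro y ⟨a, rfl⟩; exact hf a⟩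
  have h1 : ∀ a, (⨅ a, f a) - K ≤ g a := fun a => by linarith [ciInf_le hbdd a, h a]
  linarith [le_ciInf h1]

lemma ciInf_le_ciInf_add_scaled {A : Type*} [Nonempty A] {f g : A → ℝ} {K B s e : ℝ}
    (hf : ∀ a, -B ≤ f a) (h : ∀ a, f a ≤ g a + s * K) (hepos : 0 ≤ e) (he : e * s = 1) :
    e * (⨅ a, f a) ≤ e * (⨅ a, g a) + K := by
  have h1 := ciInf_le_ciInf_add hf h
  calc e * (⨅ a, f a) ≤ e * ((⨅ a, g a) + s * K) := mul_le_mul_of_nonneg_left h1 hepos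
    _ = e * (⨅ a, g a) + (e * s) * K := by ring
    _ = e * (⨅ a, g a) + K := by rw [he, one_mul]

set_option maxHeartbeats 2000000 in
/-- Perturbation of supersolutions: there is `ρ₀ ≥ 0`, depending
only on the data, such that for every `ρ ≥ ρ₀`, `ε > 0` and every bounded
continuous viscosity supersolution `u` of `∂ₜ u + H̃ = 0` on `[0,T) × ℝ^d`
(with `λ = γ̄·M + 1`), the function `u + ε·e^{−ρt}(1 + |x|²)` is again a
viscosity supersolution of the same equation. -/
theorem supersolution_perturbation
    (d m : ℕ) (hd : 0 < d) (hm : 0 < m)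
    (A : Type) [Nonempty A]
    (γbar M : ℝ) (hγbar : 0 < γbar) (hM : 0 < M)
    (b : (Fin d → ℝ) → A → (Fin d → ℝ))
    (σ : (Fin d → ℝ) → A → (Fin d → Fin m → ℝ))
    (γ : (Fin d → ℝ) → A → ℝ)
    (p : ℕ → (Fin d → ℝ) → A → ℝ)
    (c : (Fin d → ℝ) → A → ℝ)
    (hb_bdd : ∃ C, ∀ x a, ‖b x a‖ ≤ C)
    (hσ_bdd : ∃ C, ∀ x a, ‖σ x a‖ ≤ C)
    (hγ : ∀ x a, γ x a ∈ Set.Icc (0 : ℝ) γbar)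
    (hp01 : ∀ k x a, p k x a ∈ Set.Icc (0 : ℝ) 1)
    (hpsum : ∀ x a, HasSum (fun k => p k x a) 1)
    (hpmean : ∀ x a, ∃ S, S ≤ M ∧ HasSum (fun k : ℕ => (k : ℝ) * p k x a) S)
    (hc0 : ∀ x a, 0 ≤ c x a) (hc_bdd : ∃ C, ∀ x a, c x a ≤ C)
    (T : ℝ) (hT : 0 < T) :
    ∃ ρ₀ : ℝ, 0 ≤ ρ₀ ∧ ∀ ρ : ℝ, ρ₀ ≤ ρ → ∀ ε : ℝ, 0 < ε →
      ∀ u : ℝ → (Fin d → ℝ) → ℝ,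
        ContinuousOn (fun q : ℝ × (Fin d → ℝ) => u q.1 q.2)
          (Set.Icc 0 T ×ˢ (Set.univ : Set (Fin d → ℝ))) →
        (∃ C, ∀ t ∈ Set.Icc (0 : ℝ) T, ∀ x, |u t x| ≤ C) →
        IsViscSupersoln T (HamT b σ γ p c (γbar * M + 1)) u →
        IsViscSupersoln T (HamT b σ γ p c (γbar * M + 1))
          (fun t x => u t x + ε * (Real.exp (-ρ * t) * (1 + ∑ i, x i ^ 2))) := by
  classical
  obtain ⟨Cb0, hCb0⟩ := hb_bdd
  obtain ⟨Cσ0, hCσ0⟩ := hσ_bdd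
  obtain ⟨Cc0, hCc0⟩ := hc_bdd
  set Cb := max Cb0 0 with hCbdef
  set Cσ := max Cσ0 0 with hCσdef
  set Cc := max Cc0 0 with hCcdef
  have hCb : ∀ x a i, |b x a i| ≤ Cb := by
    intro x a i
    calc |b x a i| = ‖b x a i‖ := (Real.norm_eq_abs _).symm
      _ ≤ ‖b x a‖ := norm_le_pi_norm (b x a) i
      _ ≤ Cb0 := hCb0 x a
      _ ≤ Cb := le_max_left _ _
  have hCσ : ∀ x a i l, |σ x a i l| ≤ Cσ := by
    intro x a i l
    calc |σ x a i l| = ‖σ x a i l‖ := (Real.norm_eq_abs _).symm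
      _ ≤ ‖σ x a i‖ := norm_le_pi_norm (σ x a i) l
      _ ≤ ‖σ x a‖ := norm_le_pi_norm (σ x a) i
      _ ≤ Cσ0 := hCσ0 x a
      _ ≤ Cσ := le_max_left _ _
  have hCc : ∀ x a, c x a ≤ Cc := fun x a => le_trans (hCc0 x a) (le_max_left _ _)
  have hCbnn : (0:ℝ) ≤ Cb := le_max_right _ _
  have hCσnn : (0:ℝ) ≤ Cσ := le_max_right _ _
  have hCcnn : (0:ℝ) ≤ Cc := le_max_right _ _
  refine ⟨(d:ℝ) * Cb + (d:ℝ) * (m:ℝ) * Cσ ^ 2, by positivity, ?_⟩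
  intro ρ hρ ε hε u hucont hubdd hu
  intro t x ht htT ψ hψ hmin hval
  obtain ⟨hψt, hψx, hψxx, hψc1, hψc2, hψc3, hψc4⟩ := hψ
  set ψ' : TestData d :=
    { φ := fun s y => ψ.φ s y - ε * (Real.exp (-ρ * s) * (1 + ∑ i, y i ^ 2))
      φt := fun s y => ψ.φt s y + ε * (ρ * (Real.exp (-ρ * s) * (1 + ∑ i, y i ^ 2)))
      Dφ := fun s y i => ψ.Dφ s y i - ε * (Real.exp (-ρ * s) * (2 * y i))
      D2φ := fun s y i j =>
        ψ.D2φ s y i j - ε * (Real.exp (-ρ * s) * (if i = j then 2 else 0)) } with hψ'def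
  have hφ' : ∀ s y, ψ'.φ s y = ψ.φ s y - ε * (Real.exp (-ρ * s) * (1 + ∑ i, y i ^ 2)) :=
    fun s y => rfl
  have hφt' : ∀ s y, ψ'.φt s y
      = ψ.φt s y + ε * (ρ * (Real.exp (-ρ * s) * (1 + ∑ i, y i ^ 2))) := fun s y => rfl
  have hDφ' : ∀ s y, ψ'.Dφ s y = fun i => ψ.Dφ s y i - ε * (Real.exp (-ρ * s) * (2 * y i)) :=
    fun s y => rfl
  have hD2φ' : ∀ s y, ψ'.D2φ s y
      = fun i j => ψ.D2φ s y i j - ε * (Real.exp (-ρ * s) * (if i = j then 2 else 0)) :=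
    fun s y => rfl
  have hC12' : IsC12 ψ' := by
    refine ⟨?_, ?_, ?_, ?_, ?_, ?_, ?_⟩
    · intro s y
      have hexp : HasDerivAt (fun τ : ℝ => Real.exp (-ρ * τ)) (Real.exp (-ρ * s) * (-ρ * 1)) s :=
        HasDerivAt.exp ((hasDerivAt_id s).const_mul (-ρ))
      have h2 := (hexp.mul_const (1 + ∑ i, y i ^ 2)).const_mul ε
      have h3 := (hψt s y).sub h2
      rw [hφt']
      refine h3.congr_deriv ?_
      ring
    · intro s y
      have hq := (((hasFDerivAt_sq_sum y).const_add 1).const_mul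
        (Real.exp (-ρ * s))).const_mul ε
      have h3 := (hψx s y).sub hq
      have heq : gradCLM (ψ.Dφ s y) - ε • Real.exp (-ρ * s) • gradCLM (fun i => 2 * y i)
          = gradCLM (ψ'.Dφ s y) := by
        rw [hDφ', smul_smul, gradCLM_sub]
        congr 1
        funext i
        ring
      rw [← heq]
      exact h3
    · intro s y i
      have hproj : HasFDerivAt (fun z : Fin d → ℝ => z i)
          (ContinuousLinearMap.proj i : (Fin d → ℝ) →L[ℝ] ℝ) y :=
        (ContinuousLinearMap.proj i : (Fin d → ℝ) →L[ℝ] ℝ).hasFDerivAt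
      have h2 := ((hproj.const_mul (2:ℝ)).const_mul (Real.exp (-ρ * s))).const_mul ε
      have h3 := (hψxx s y i).sub h2
      have heq : gradCLM (fun j => ψ.D2φ s y i j)
            - ε • Real.exp (-ρ * s) • (2:ℝ) • (ContinuousLinearMap.proj i : (Fin d → ℝ) →L[ℝ] ℝ)
          = gradCLM (fun j => ψ'.D2φ s y i j) := by
        rw [hD2φ', smul_smul, smul_smul, gradCLM_proj]
        refine ContinuousLinearMap.ext fun z => ?_
        simp only [ContinuousLinearMap.sub_apply, gradCLM_apply, ← Finset.sum_sub_distrib]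
        refine Finset.sum_congr rfl fun j _ => ?_
        by_cases h : i = j
        · simp only [h, if_true]
          ring
        · simp only [h, if_false]
          ring
      rw [← heq]
      exact h3
    · exact hψc1.sub (continuous_const.mul
        ((Real.continuous_exp.comp (continuous_const.mul continuous_fst)).mul
          (continuous_const.add (continuous_finset_sum _ fun i _ =>
            ((continuous_apply i).comp continuous_snd).pow 2))))
    · exact hψc2.add (continuous_const.mul (continuous_const.mul
        ((Real.continuous_exp.comp (continuous_const.mul continuous_fst)).mul
          (continuous_const.add (continuous_finset_sum _ fun i _ =>
            ((continuous_apply i).comp continuous_snd).pow 2)))))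
    · exact continuous_pi fun i => ((continuous_apply i).comp hψc3).sub
        (continuous_const.mul
          ((Real.continuous_exp.comp (continuous_const.mul continuous_fst)).mul
            (continuous_const.mul ((continuous_apply i).comp continuous_snd))))
    · exact continuous_pi fun i => continuous_pi fun j =>
        ((continuous_apply j).comp ((continuous_apply i).comp hψc4)).sub
          (continuous_const.mul
            ((Real.continuous_exp.comp (continuous_const.mul continuous_fst)).mul
              continuous_const))
  have hval2 : u t x + ε * (Real.exp (-ρ * t) * (1 + ∑ i, x i ^ 2)) = ψ.φ t x := hval
  have hmin' : IsLocalMinOn (fun q : ℝ × (Fin d → ℝ) => u q.1 q.2 - ψ'.φ q.1 q.2)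
      (Set.Icc (0:ℝ) T ×ˢ (Set.univ : Set (Fin d → ℝ))) (t, x) := by
    have hfe : (fun q : ℝ × (Fin d → ℝ) =>
        (fun t x => u t x + ε * (Real.exp (-ρ * t) * (1 + ∑ i, x i ^ 2))) q.1 q.2
          - ψ.φ q.1 q.2)
        = (fun q : ℝ × (Fin d → ℝ) => u q.1 q.2 - ψ'.φ q.1 q.2) := by
      funext q
      simp only [hφ']
      ring
    exact hfe ▸ hmin
  have hval' : u t x = ψ'.φ t x := by
    rw [hφ']
    linarith [hval2]
  have hres := hu t x ht htT ψ' hC12' hmin' hval'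
  show ψ.φt t x + HamT b σ γ p c (γbar * M + 1) t x
      (u t x + ε * (Real.exp (-ρ * t) * (1 + ∑ i, x i ^ 2))) (ψ.Dφ t x) (ψ.D2φ t x) ≤ 0
  set E : ℝ := ε * (Real.exp (-ρ * t) * (1 + ∑ i, x i ^ 2)) with hEdef
  have hX : (0:ℝ) ≤ ∑ i, x i ^ 2 := Finset.sum_nonneg fun i _ => sq_nonneg _
  have hE0 : 0 ≤ E := by rw [hEdef]; positivity
  have hkey : HamT b σ γ p c (γbar * M + 1) t x (u t x + E) (ψ.Dφ t x) (ψ.D2φ t x)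
      ≤ HamT b σ γ p c (γbar * M + 1) t x (u t x) (ψ'.Dφ t x) (ψ'.D2φ t x) + ρ * E := by
    simp only [HamT, hDφ', hD2φ', Ham]
    set s0 := Real.exp (-(γbar * M + 1) * t) with hs0def
    have hs0 : 0 < s0 := Real.exp_pos _
    have he1 : 0 < Real.exp (-ρ * t) := Real.exp_pos _
    set B : ℝ := Cb * (∑ i, |s0 * ψ.Dφ t x i|)
        + 1/2 * (∑ i, ∑ j, ((m:ℝ) * Cσ^2) * |s0 * ψ.D2φ t x j i|)
        + 2 * γbar + Cc * |s0 * (u t x + E)| with hBdef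
    have hlow : ∀ a : A, -B ≤ (dotp (b x a) fun i => s0 * ψ.Dφ t x i)
        + 1/2 * (∑ i, ∑ j, (∑ l, σ x a i l * σ x a j l) * (s0 * ψ.D2φ t x j i))
        + Gb γ p x a (s0 * (u t x + E)) - c x a * (s0 * (u t x + E)) := by
      intro a
      have hdot : -(Cb * (∑ i, |s0 * ψ.Dφ t x i|)) ≤ dotp (b x a) fun i => s0 * ψ.Dφ t x i := by
        have h1 : ∀ i : Fin d, -(Cb * |s0 * ψ.Dφ t x i|) ≤ b x a i * (s0 * ψ.Dφ t x i) := by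
          intro i
          have h2 := neg_abs_le (b x a i * (s0 * ψ.Dφ t x i))
          rw [abs_mul] at h2
          have h4 := mul_le_mul_of_nonneg_right (hCb x a i) (abs_nonneg (s0 * ψ.Dφ t x i))
          linarith
        calc -(Cb * ∑ i, |s0 * ψ.Dφ t x i|) = ∑ i, -(Cb * |s0 * ψ.Dφ t x i|) := by
              rw [Finset.mul_sum, ← Finset.sum_neg_distrib]
          _ ≤ ∑ i, b x a i * (s0 * ψ.Dφ t x i) := Finset.sum_le_sum fun i _ => h1 i
          _ = dotp (b x a) fun i => s0 * ψ.Dφ t x i := rfl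
      have hS : ∀ i j : Fin d, |∑ l, σ x a i l * σ x a j l| ≤ (m:ℝ) * Cσ^2 := by
        intro i j
        calc |∑ l, σ x a i l * σ x a j l| ≤ ∑ l, |σ x a i l * σ x a j l| :=
              Finset.abs_sum_le_sum_abs _ _
          _ ≤ ∑ _l : Fin m, Cσ^2 := Finset.sum_le_sum fun l _ => by
              rw [abs_mul]
              have h1 := hCσ x a i l
              have h2 := hCσ x a j l
              nlinarith [abs_nonneg (σ x a i l), abs_nonneg (σ x a j l)]
          _ = (m:ℝ) * Cσ^2 := by simp [Finset.sum_const, Finset.card_univ, nsmul_eq_mul]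
      have htr : -(1/2 * (∑ i, ∑ j, ((m:ℝ) * Cσ^2) * |s0 * ψ.D2φ t x j i|))
          ≤ 1/2 * (∑ i, ∑ j, (∑ l, σ x a i l * σ x a j l) * (s0 * ψ.D2φ t x j i)) := by
        have h1 : ∀ i j : Fin d, -(((m:ℝ) * Cσ^2) * |s0 * ψ.D2φ t x j i|)
            ≤ (∑ l, σ x a i l * σ x a j l) * (s0 * ψ.D2φ t x j i) := by
          intro i j
          have h2 := neg_abs_le ((∑ l, σ x a i l * σ x a j l) * (s0 * ψ.D2φ t x j i))
          rw [abs_mul] at h2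
          have h4 := mul_le_mul_of_nonneg_right (hS i j) (abs_nonneg (s0 * ψ.D2φ t x j i))
          linarith
        have h5 : (∑ i : Fin d, ∑ j : Fin d, -(((m:ℝ) * Cσ^2) * |s0 * ψ.D2φ t x j i|))
            ≤ ∑ i : Fin d, ∑ j : Fin d, (∑ l, σ x a i l * σ x a j l) * (s0 * ψ.D2φ t x j i) :=
          Finset.sum_le_sum fun i _ => Finset.sum_le_sum fun j _ => h1 i j
        have h6 : (∑ i : Fin d, ∑ j : Fin d, -(((m:ℝ) * Cσ^2) * |s0 * ψ.D2φ t x j i|))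
            = -(∑ i : Fin d, ∑ j : Fin d, ((m:ℝ) * Cσ^2) * |s0 * ψ.D2φ t x j i|) := by
          simp [Finset.sum_neg_distrib]
        rw [h6] at h5
        linarith
      have hGl : -(2 * γbar) ≤ Gb γ p x a (s0 * (u t x + E)) :=
        Gb_lower γ p γbar x a (hγ x a).1 (hγ x a).2 (fun k => (hp01 k x a).1) (hpsum x a) _
      have hcl : -(Cc * |s0 * (u t x + E)|) ≤ -(c x a * (s0 * (u t x + E))) := by
        have h1 := le_abs_self (s0 * (u t x + E))
        have h2 := mul_le_mul_of_nonneg_left h1 (hc0 x a)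
        have h3 := mul_le_mul_of_nonneg_right (hCc x a) (abs_nonneg (s0 * (u t x + E)))
        linarith
      rw [hBdef]
      linarith [hdot, htr, hGl, hcl]
    have hper : ∀ a : A, (dotp (b x a) fun i => s0 * ψ.Dφ t x i)
        + 1/2 * (∑ i, ∑ j, (∑ l, σ x a i l * σ x a j l) * (s0 * ψ.D2φ t x j i))
        + Gb γ p x a (s0 * (u t x + E)) - c x a * (s0 * (u t x + E))
        ≤ ((dotp (b x a) fun i => s0 * (ψ.Dφ t x i - ε * (Real.exp (-ρ * t) * (2 * x i))))
        + 1/2 * (∑ i, ∑ j, (∑ l, σ x a i l * σ x a j l)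
            * (s0 * (ψ.D2φ t x j i - ε * (Real.exp (-ρ * t) * (if j = i then 2 else 0)))))
        + Gb γ p x a (s0 * u t x) - c x a * (s0 * u t x))
        + s0 * ((((d:ℝ) * Cb + (d:ℝ) * (m:ℝ) * Cσ^2) + γbar * M) * E) := by
      intro a
      have hdot2 : (dotp (b x a) fun i => s0 * ψ.Dφ t x i)
          ≤ (dotp (b x a) fun i => s0 * (ψ.Dφ t x i - ε * (Real.exp (-ρ * t) * (2 * x i))))
            + s0 * ((d:ℝ) * Cb * E) := by
        rw [← sub_le_iff_le_add']
        simp only [dotp]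
        rw [← Finset.sum_sub_distrib]
        have hterm : ∀ i : Fin d, b x a i * (s0 * ψ.Dφ t x i)
            - b x a i * (s0 * (ψ.Dφ t x i - ε * (Real.exp (-ρ * t) * (2 * x i))))
            = s0 * (ε * Real.exp (-ρ * t)) * (2 * (b x a i * x i)) := fun i => by ring
        rw [Finset.sum_congr rfl fun i _ => hterm i]
        have hterm2 : ∀ i : Fin d, s0 * (ε * Real.exp (-ρ * t)) * (2 * (b x a i * x i))
            ≤ s0 * (ε * Real.exp (-ρ * t)) * (Cb * (1 + x i ^ 2)) := by
          intro i
          have hcoef : (0:ℝ) ≤ s0 * (ε * Real.exp (-ρ * t)) := by positivity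
          apply mul_le_mul_of_nonneg_left _ hcoef
          have h2 : b x a i * x i ≤ Cb * |x i| := by
            have h3 := le_abs_self (b x a i * x i)
            rw [abs_mul] at h3
            have h4 := mul_le_mul_of_nonneg_right (hCb x a i) (abs_nonneg (x i))
            linarith
          nlinarith [mul_le_mul_of_nonneg_left (sq_nonneg (|x i| - 1)) hCbnn, sq_abs (x i)]
        calc (∑ i, s0 * (ε * Real.exp (-ρ * t)) * (2 * (b x a i * x i)))
            ≤ ∑ i, s0 * (ε * Real.exp (-ρ * t)) * (Cb * (1 + x i ^ 2)) :=
              Finset.sum_le_sum fun i _ => hterm2 i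
          _ = s0 * (ε * Real.exp (-ρ * t)) * (Cb * ((d:ℝ) + ∑ i, x i ^ 2)) := by
              rw [← Finset.mul_sum, ← Finset.mul_sum, Finset.sum_add_distrib]
              simp [Finset.card_univ]
          _ ≤ s0 * ((d:ℝ) * Cb * E) := by
              rw [hEdef]
              have hdd : (1:ℝ) ≤ (d:ℝ) := by exact_mod_cast hd
              have hkey2 : 0 ≤ s0 * ε * Real.exp (-ρ * t) * Cb * (∑ i, x i ^ 2) * ((d:ℝ) - 1) :=
                mul_nonneg (mul_nonneg (mul_nonneg (mul_nonneg
                  (mul_nonneg hs0.le hε.le) he1.le) hCbnn) hX) (by linarith)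
              linarith [hkey2]
      have hS : ∀ i : Fin d, (∑ l, σ x a i l * σ x a i l) ≤ (m:ℝ) * Cσ^2 := by
        intro i
        calc (∑ l, σ x a i l * σ x a i l) ≤ ∑ _l : Fin m, Cσ^2 :=
            Finset.sum_le_sum fun l _ => by
              have h := abs_le.mp (hCσ x a i l)
              nlinarith [h.1, h.2]
          _ = (m:ℝ) * Cσ^2 := by simp [Finset.sum_const, Finset.card_univ, nsmul_eq_mul]
      have htr2 : 1/2 * (∑ i, ∑ j, (∑ l, σ x a i l * σ x a j l) * (s0 * ψ.D2φ t x j i))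
          ≤ 1/2 * (∑ i, ∑ j, (∑ l, σ x a i l * σ x a j l)
              * (s0 * (ψ.D2φ t x j i - ε * (Real.exp (-ρ * t) * (if j = i then 2 else 0)))))
            + s0 * ((d:ℝ) * (m:ℝ) * Cσ^2 * E) := by
        rw [← sub_le_iff_le_add']
        have hterm : ∀ i : Fin d,
            (∑ j, (∑ l, σ x a i l * σ x a j l) * (s0 * ψ.D2φ t x j i))
            - (∑ j, (∑ l, σ x a i l * σ x a j l)
                * (s0 * (ψ.D2φ t x j i - ε * (Real.exp (-ρ * t) * (if j = i then 2 else 0)))))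
            = (∑ l, σ x a i l * σ x a i l) * (s0 * (ε * Real.exp (-ρ * t))) * 2 := by
          intro i
          rw [← Finset.sum_sub_distrib]
          have hj : ∀ j : Fin d, (∑ l, σ x a i l * σ x a j l) * (s0 * ψ.D2φ t x j i)
              - (∑ l, σ x a i l * σ x a j l)
                * (s0 * (ψ.D2φ t x j i - ε * (Real.exp (-ρ * t) * (if j = i then 2 else 0))))
              = if j = i then (∑ l, σ x a i l * σ x a i l) * (s0 * (ε * Real.exp (-ρ * t))) * 2
                else 0 := by
            intro j
            by_cases h : j = i
            · subst h
              simp only [eq_self_iff_true, if_true]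
              generalize (∑ l : Fin m, σ x a j l * σ x a j l) = S
              ring
            · simp only [if_neg h]
              generalize (∑ l : Fin m, σ x a i l * σ x a j l) = S
              ring
          rw [Finset.sum_congr rfl fun j _ => hj j]
          simp [Finset.sum_ite_eq']
        rw [← mul_sub, ← Finset.sum_sub_distrib, Finset.sum_congr rfl fun i _ => hterm i]
        have hS0 : ∀ i : Fin d, 0 ≤ ∑ l, σ x a i l * σ x a i l :=
          fun i => Finset.sum_nonneg fun l _ => mul_self_nonneg _
        have hsum2 : (∑ i : Fin d, (∑ l, σ x a i l * σ x a i l)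
              * (s0 * (ε * Real.exp (-ρ * t))) * 2)
            ≤ (d:ℝ) * ((m:ℝ) * Cσ^2) * (s0 * (ε * Real.exp (-ρ * t))) * 2 := by
          calc (∑ i : Fin d, (∑ l, σ x a i l * σ x a i l) * (s0 * (ε * Real.exp (-ρ * t))) * 2)
              ≤ ∑ _i : Fin d, ((m:ℝ) * Cσ^2) * (s0 * (ε * Real.exp (-ρ * t))) * 2 :=
                Finset.sum_le_sum fun i _ => by
                  have h1 := hS i
                  have hc : (0:ℝ) ≤ s0 * (ε * Real.exp (-ρ * t)) * 2 := by positivity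
                  nlinarith [mul_le_mul_of_nonneg_right h1 hc]
            _ = (d:ℝ) * ((m:ℝ) * Cσ^2) * (s0 * (ε * Real.exp (-ρ * t))) * 2 := by
                simp [Finset.sum_const, Finset.card_univ, nsmul_eq_mul]
                ring
        rw [hEdef]
        have hkey3 : 0 ≤ s0 * ε * Real.exp (-ρ * t) * ((d:ℝ) * (m:ℝ) * Cσ^2) * (∑ i, x i ^ 2) :=
          mul_nonneg (mul_nonneg (mul_nonneg (mul_nonneg hs0.le hε.le) he1.le)
            (by positivity)) hX
        linarith [hsum2, hkey3]
      have hGb2 : Gb γ p x a (s0 * (u t x + E)) ≤ Gb γ p x a (s0 * u t x) + γbar * M * (s0 * E) := by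
        have hle : s0 * u t x ≤ s0 * (u t x + E) :=
          mul_le_mul_of_nonneg_left (by linarith) hs0.le
        have h := Gb_sub_le γ p γbar M hM.le x a (hγ x a).1 (hγ x a).2
          (fun k => (hp01 k x a).1) (hpsum x a) (hpmean x a) hle
        have heq : s0 * (u t x + E) - s0 * u t x = s0 * E := by ring
        rw [heq] at h
        linarith
      have hcterm : -(c x a * (s0 * (u t x + E))) ≤ -(c x a * (s0 * u t x)) := by
        have h1 : c x a * (s0 * u t x) ≤ c x a * (s0 * (u t x + E)) :=
          mul_le_mul_of_nonneg_left
            (mul_le_mul_of_nonneg_left (by linarith) hs0.le) (hc0 x a)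
        linarith
      linarith [hdot2, htr2, hGb2, hcterm]
    have hcancel : Real.exp ((γbar * M + 1) * t) * s0 = 1 := by
      rw [hs0def, ← Real.exp_add]
      have hz : (γbar * M + 1) * t + -(γbar * M + 1) * t = 0 := by ring
      rw [hz, Real.exp_zero]
    have h8 := ciInf_le_ciInf_add_scaled (B := B) hlow hper
      (Real.exp_pos ((γbar * M + 1) * t)).le hcancel
    have h9 : (((d:ℝ) * Cb + (d:ℝ) * (m:ℝ) * Cσ^2) + γbar * M) * E ≤ (ρ + (γbar * M + 1)) * E :=
      mul_le_mul_of_nonneg_right (by linarith) hE0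
    linarith [h8, h9]
  rw [hφt' t x] at hres
  have hEeq : ε * (ρ * (Real.exp (-ρ * t) * (1 + ∑ i, x i ^ 2))) = ρ * E := by
    rw [hEdef]; ring
  rw [hEeq] at hres
  linarith [hkey, hres]

end
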